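/- For every x ∈ dom(A), every t ≥ 0 and every y ∈ Y one has ⟨T(t)x − x, y⟩ = ∫₀ᵗ ⟨T(s)(Ax), y⟩ ds. -/
import Mathlib


open scoped Topology
open MeasureTheory

open MeasureTheory in
private lemma shift_Ioi_integral' (t : ℝ) (g : ℝ → ℂ) :
    ∫ s in Set.Ioi (0:ℝ), g (s + t) = ∫ s in Set.Ioi t, g s := by
  have h := (MeasurableEquiv.addRight t).measurableEmbedding.setIntegral_map g (Set.Ioi t)
    (μ := volume)
  have hmap : Measure.map (MeasurableEquiv.addRight t) volume = volume := by
    simp [MeasurableEquiv.coe_addRight, map_add_right_eq_self]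
  rw [hmap] at h
  rw [h]
  congr 1
  ext s
  simp [MeasurableEquiv.coe_addRight]

/-- For every `x ∈ dom(A)`, `t ≥ 0` and `y ∈ Y`:
`⟨T(t)x − x, y⟩ = ∫₀ᵗ ⟨T(s)(Ax), y⟩ ds`. -/
theorem statement5
    {X : Type*} [NormedAddCommGroup X] [NormedSpace ℂ X] [CompleteSpace X]
    (Y : Submodule ℂ (X →L[ℂ] ℂ))
    (hnorming : ∀ x : X, ‖x‖ = sSup {r : ℝ | ∃ y ∈ Y, ‖y‖ ≤ 1 ∧ r = ‖y x‖})
    (T : ℝ → X →L[ℂ] X)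
    (hT0 : T 0 = 1)
    (hTsg : ∀ s t : ℝ, 0 ≤ s → 0 ≤ t → T (t + s) = (T t).comp (T s))
    (M ω : ℝ) (hM : 1 ≤ M) (hω : ω < 0)
    (hgrowth : ∀ t : ℝ, 0 ≤ t → ‖T t‖ ≤ M * Real.exp (ω * t))
    (dom : Submodule ℂ X) (A : X → X)
    (hA_add : ∀ x ∈ dom, ∀ y ∈ dom, A (x + y) = A x + A y)
    (hA_smul : ∀ (c : ℂ), ∀ x ∈ dom, A (c • x) = c • A x)
    (R : ℝ → X →L[ℂ] X)
    (hRdom : ∀ l : ℝ, 0 ≤ l → ∀ x : X, R l x ∈ dom)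
    (hR1 : ∀ l : ℝ, 0 ≤ l → ∀ x : X, (l : ℂ) • R l x - A (R l x) = x)
    (hR2 : ∀ l : ℝ, 0 ≤ l → ∀ x ∈ dom, R l ((l : ℂ) • x - A x) = x)
    (hmeas : ∀ (x : X), ∀ y ∈ Y, Measurable ((Set.Ici (0:ℝ)).restrict fun s : ℝ => y (T s x)))
    (hlap : ∀ l : ℝ, 0 ≤ l → ∀ (x : X), ∀ y ∈ Y,
      IntegrableOn (fun s : ℝ => Real.exp (-l * s) • y (T s x)) (Set.Ioi 0) ∧
      y (R l x) = ∫ s in Set.Ioi (0:ℝ), Real.exp (-l * s) • y (T s x))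
    (hcomm : ∀ t : ℝ, 0 ≤ t → (T t).comp (R 0) = (R 0).comp (T t))
    (x : X) (hx : x ∈ dom) (t : ℝ) (ht : 0 ≤ t) :
    ∀ y ∈ Y, y (T t x - x) = ∫ s in (0:ℝ)..t, y (T s (A x)) := by
  intro y hy
  set f : ℝ → ℂ := fun s => y (T s (A x)) with hf
  have hlap0 : ∀ z : X, IntegrableOn (fun s : ℝ => y (T s z)) (Set.Ioi 0) ∧
      y (R 0 z) = ∫ s in Set.Ioi (0:ℝ), y (T s z) := by
    intro z
    have h := hlap 0 le_rfl z y hy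
    simpa using h
  have hIoi : IntegrableOn f (Set.Ioi 0) := (hlap0 (A x)).1
  have hRAx : R 0 (A x) = -x := by
    have h2 := hR2 0 le_rfl x hx
    simp only [Complex.ofReal_zero, zero_smul, zero_sub, map_neg] at h2
    rw [neg_eq_iff_eq_neg] at h2
    exact h2
  have hyx : y x = -∫ s in Set.Ioi (0:ℝ), f s := by
    have h := (hlap0 (A x)).2
    rw [hRAx, map_neg] at h
    exact neg_eq_iff_eq_neg.mp h
  have hTtx : T t x = -(R 0 (T t (A x))) := by
    have hx' : x = -(R 0 (A x)) := by rw [hRAx, neg_neg]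
    have hc := DFunLike.congr_fun (hcomm t ht) (A x)
    simp only [ContinuousLinearMap.comp_apply] at hc
    rw [congrArg (T t) hx', map_neg, hc]
  have hcongr : ∫ s in Set.Ioi (0:ℝ), y (T s (T t (A x))) = ∫ s in Set.Ioi (0:ℝ), f (s + t) := by
    apply setIntegral_congr_fun measurableSet_Ioi
    intro s hs
    have hsg := hTsg t s ht (le_of_lt hs)
    simp only [hf]
    rw [hsg]
    rfl
  have hyTtx : y (T t x) = -∫ s in Set.Ioi t, f s := by
    rw [hTtx, map_neg, (hlap0 (T t (A x))).2, hcongr, shift_Ioi_integral' t f]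
  have hsplit : ∫ s in Set.Ioi (0:ℝ), f s
      = (∫ s in Set.Ioc (0:ℝ) t, f s) + ∫ s in Set.Ioi t, f s := by
    rw [← setIntegral_union (Set.Ioc_disjoint_Ioi le_rfl) measurableSet_Ioi
      (hIoi.mono_set Set.Ioc_subset_Ioi_self) (hIoi.mono_set (Set.Ioi_subset_Ioi ht)),
      Set.Ioc_union_Ioi_eq_Ioi ht]
  rw [map_sub, hyx, hyTtx, intervalIntegral.integral_of_le ht]
  rw [hsplit]
  ring
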